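/- arXiv:q-alg/9708031 — 4 statements merged into one kernel-verified Lean document; each statement's English description precedes it below -/
import Mathlib

section
/- Let q be a primitive cube root of unity in ℂ. Define the 3×3 matrices J (cyclic permutation matrix with J e_0 = e_1, J e_1 = e_2, J e_2 = e_0), Q = diag(1, q^{-1}, q^{-2}), and N (nilpotent shift with N e_0 = e_1, N e_1 = e_2, N e_2 = 0). Then the 27 matrices J^p Q^{r+s} ⊗ N^r ⊗ N^s in M_3(ℂ) ⊗ M_3(ℂ) ⊗ M_3(ℂ), for p, r, s ∈ {0,1,2}, are linearly independent over ℂ. -/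
open Matrix Kronecker

noncomputable section

/-- The cyclic permutation matrix `J` with `J e₀ = e₁`, `J e₁ = e₂`, `J e₂ = e₀`. -/
def Jmat : Matrix (Fin 3) (Fin 3) ℂ := !![0,0,1; 1,0,0; 0,1,0]

/-- The diagonal matrix `Q = diag(1, q⁻¹, q⁻²)`. -/
def Qmat (q : ℂ) : Matrix (Fin 3) (Fin 3) ℂ := !![1,0,0; 0,q⁻¹,0; 0,0,q⁻¹^2]

/-- The nilpotent shift matrix `N` with `N e₀ = e₁`, `N e₁ = e₂`, `N e₂ = 0`. -/
def Nmat : Matrix (Fin 3) (Fin 3) ℂ := !![0,0,0; 1,0,0; 0,1,0]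

lemma Qpow_col0 (q : ℂ) (k : ℕ) (i : Fin 3) :
    (Qmat q ^ k) i 0 = if i = 0 then 1 else 0 := by
  induction k with
  | zero => simp [Matrix.one_apply]
  | succ n ih =>
    rw [pow_succ, Matrix.mul_apply]
    have hQ : ∀ j : Fin 3, Qmat q j 0 = if j = 0 then 1 else 0 := by
      intro j; fin_cases j <;> simp [Qmat, Matrix.vecHead, Matrix.vecTail]
    simp only [hQ, mul_ite, mul_one, mul_zero]
    rw [Finset.sum_ite_eq' Finset.univ (0 : Fin 3)]
    simpa using ih

lemma Npow_col0 (r : Fin 3) (i : Fin 3) :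
    (Nmat ^ (r : ℕ)) i 0 = if i = r then 1 else 0 := by
  fin_cases r <;> fin_cases i <;>
    norm_num [Nmat, pow_succ, Matrix.mul_fin_three, Matrix.one_apply,
      Matrix.one_fin_three, Fin.ext_iff]

lemma Jpow_col0 (q : ℂ) (p : Fin 3) (k : ℕ) (i : Fin 3) :
    (Jmat ^ (p : ℕ) * Qmat q ^ k) i 0 = if i = p then 1 else 0 := by
  rw [Matrix.mul_apply]
  simp only [Qpow_col0, mul_ite, mul_one, mul_zero]
  rw [Finset.sum_ite_eq' Finset.univ (0 : Fin 3)]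
  simp only [Finset.mem_univ, if_true]
  fin_cases p <;> fin_cases i <;>
    norm_num [Jmat, pow_succ, Matrix.mul_fin_three, Matrix.one_apply,
      Matrix.one_fin_three, Fin.ext_iff]

/-- The 27 matrices `J^p Q^(r+s) ⊗ N^r ⊗ N^s`, `p, r, s ∈ {0,1,2}`, are linearly
independent over `ℂ`. -/
theorem linearIndependent_J_Q_N (q : ℂ) (hq : IsPrimitiveRoot q 3) :
    LinearIndependent ℂ (fun prs : Fin 3 × Fin 3 × Fin 3 =>
      (Jmat ^ (prs.1 : ℕ) * Qmat q ^ ((prs.2.1 : ℕ) + (prs.2.2 : ℕ))) ⊗ₖ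
        (Nmat ^ (prs.2.1 : ℕ)) ⊗ₖ (Nmat ^ (prs.2.2 : ℕ))) := by
  rw [Fintype.linearIndependent_iff]
  intro g hg prs
  obtain ⟨p, r, s⟩ := prs
  have h := congrFun (congrFun hg ((p, r), s)) ((0, 0), 0)
  simp only [Matrix.sum_apply, Matrix.smul_apply, Matrix.kroneckerMap_apply,
    Matrix.zero_apply, smul_eq_mul, Jpow_col0, Npow_col0] at h
  rw [Fintype.sum_eq_single (⟨p, r, s⟩ : Fin 3 × Fin 3 × Fin 3)] at h
  · simpa using h
  · rintro ⟨p', r', s'⟩ hne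
    have : ¬(p = p' ∧ r = r' ∧ s = s') := by
      rintro ⟨rfl, rfl, rfl⟩; exact hne rfl
    by_cases h1 : p = p' <;> by_cases h2 : r = r' <;> by_cases h3 : s = s' <;>
      simp_all

end
end

section
/- Let P be a Hopf algebra, I a Hopf ideal, δ = (id ⊗ π) ∘ Δ the induced right (P/I)-coaction, and B = P^{co(P/I)}. If P is a (P/I)-Galois extension of B (i.e. the canonical map P ⊗_B P → P ⊗ P/I is bijective), then I = B⁺P, where B⁺ = B ∩ Ker ε. -/
open TensorProduct

noncomputable section

variable (k : Type*) [Field k] (P : Type*) [Ring P] [HopfAlgebra k P]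
  (H : Type*) [Ring H] [HopfAlgebra k H]

/-- The lift `T_R : P ⊗ P → P ⊗ H`, `p ⊗ p' ↦ p p'₁ ⊗ π(p'₂)`, of the canonical Galois map
`can : P ⊗_B P → P ⊗ H`. -/
def TR (π : P →ₐ[k] H) : P ⊗[k] P →ₗ[k] P ⊗[k] H :=
  (TensorProduct.map (LinearMap.mul' k P) π.toLinearMap) ∘ₗ
    ((TensorProduct.assoc k P P P).symm.toLinearMap) ∘ₗ
      (TensorProduct.map LinearMap.id (Coalgebra.comul (R := k)))

/-- The kernel of the canonical surjection `P ⊗ P → P ⊗_B P`: the span of the elements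
`p b ⊗ p' - p ⊗ b p'` with `b ∈ B`. -/
def relSpan (δ : P →ₗ[k] P ⊗[k] H) : Submodule k (P ⊗[k] P) :=
  Submodule.span k {x : P ⊗[k] P | ∃ p p' b : P,
    δ b = b ⊗ₜ[k] (1 : H) ∧ x = (p * b) ⊗ₜ[k] p' - p ⊗ₜ[k] (b * p')}

open Coalgebra HopfAlgebra

lemma aux_sum_counit_smul (x : P) (r : Coalgebra.Repr k x (P × P)) :
    ∑ i ∈ r.index, Coalgebra.counit (R := k) (r.left i) • r.right i = x := by
  have h := congrArg (TensorProduct.lid k P) (Coalgebra.sum_counit_tmul_eq r)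
  rw [map_sum] at h
  simp only [TensorProduct.lid_tmul, one_smul] at h
  exact h

lemma aux_sum_smul_counit (x : P) (r : Coalgebra.Repr k x (P × P)) :
    ∑ i ∈ r.index, Coalgebra.counit (R := k) (r.right i) • r.left i = x := by
  have h := congrArg (TensorProduct.rid k P) (Coalgebra.sum_tmul_counit_eq r)
  rw [map_sum] at h
  simp only [TensorProduct.rid_tmul, one_smul] at h
  exact h

lemma aux_counit_antipode (a : P) :
    Coalgebra.counit (R := k) (antipode (R := k) a) = Coalgebra.counit (R := k) (A := P) a := by
  set r := ℛ k a with hr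
  have h3 := congrArg (Coalgebra.counit (R := k) (A := P)) (HopfAlgebra.sum_antipode_mul_eq_algebraMap_counit r)
  rw [map_sum] at h3
  simp only [Bialgebra.counit_mul, Algebra.linearMap_apply, Algebra.algebraMap_eq_smul_one,
    map_smul, Bialgebra.counit_one, smul_eq_mul, mul_one] at h3
  conv_lhs => rw [← aux_sum_smul_counit k P a r]
  rw [map_sum, map_sum, ← h3]
  exact Finset.sum_congr rfl fun i _ => by
    rw [map_smul, map_smul, smul_eq_mul, mul_comm]

/-- Key computation: `T_R ((S ⊗ id)(Δ x)) = 1 ⊗ π x`. -/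
lemma aux_TR_antipode (π : P →ₐ[k] H) (x : P) :
    TR k P H π ((LinearMap.rTensor P (antipode (R := k))) (Coalgebra.comul x)) =
      (1 : P) ⊗ₜ[k] (π x) := by
  set r := ℛ k x with hr
  have step1 : TR k P H π ((LinearMap.rTensor P (antipode (R := k))) (Coalgebra.comul x)) =
      ∑ i ∈ r.index, ∑ j ∈ (ℛ k (r.right i)).index,
        (antipode (R := k) (r.left i) * (ℛ k (r.right i)).left j) ⊗ₜ[k]
          (π ((ℛ k (r.right i)).right j)) := by
    rw [← r.eq, map_sum, map_sum]
    refine Finset.sum_congr rfl fun i _ => ?_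
    rw [LinearMap.rTensor_tmul]
    simp only [TR, LinearMap.comp_apply, TensorProduct.map_tmul, LinearMap.id_coe, id_eq]
    rw [← (ℛ k (r.right i)).eq, tmul_sum, map_sum, map_sum]
    refine Finset.sum_congr rfl fun j _ => ?_
    simp [TensorProduct.assoc_symm_tmul, LinearMap.mul'_apply]
  have h := Coalgebra.sum_tmul_tmul_eq r (fun i => ℛ k (r.left i)) (fun i => ℛ k (r.right i))
  apply_fun (TensorProduct.map (LinearMap.mul' k P) π.toLinearMap ∘ₗ
      (TensorProduct.assoc k P P P).symm.toLinearMap ∘ₗ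
        LinearMap.rTensor (P ⊗[k] P) (antipode (R := k))) at h
  simp only [map_sum, LinearMap.comp_apply, LinearMap.rTensor_tmul,
    LinearEquiv.coe_coe, TensorProduct.assoc_symm_tmul, TensorProduct.map_tmul,
    LinearMap.mul'_apply, AlgHom.toLinearMap_apply] at h
  rw [step1, ← h]
  have step3 : ∀ i ∈ r.index, ∑ j ∈ (ℛ k (r.left i)).index,
      (antipode (R := k) ((ℛ k (r.left i)).left j) * (ℛ k (r.left i)).right j) ⊗ₜ[k]
        (π (r.right i)) =
      Coalgebra.counit (R := k) (r.left i) • ((1 : P) ⊗ₜ[k] (π (r.right i))) := by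
    intro i _
    rw [← TensorProduct.sum_tmul, HopfAlgebra.sum_antipode_mul_eq_smul (ℛ k (r.left i)),
      TensorProduct.smul_tmul']
  rw [Finset.sum_congr rfl step3]
  have step4 : ∑ i ∈ r.index,
      Coalgebra.counit (R := k) (r.left i) • ((1 : P) ⊗ₜ[k] (π (r.right i))) =
      (1 : P) ⊗ₜ[k] (π (∑ i ∈ r.index, Coalgebra.counit (R := k) (r.left i) • r.right i)) := by
    rw [map_sum, tmul_sum]
    exact Finset.sum_congr rfl fun i _ => by rw [map_smul, tmul_smul]
  rw [step4, aux_sum_counit_smul k P x r]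

/-- Let `P` be a Hopf algebra over a field `k`, `I` a Hopf ideal presented as the kernel of a
surjective Hopf algebra map `π : P → H` (so `H = P/I`), `δ = (id ⊗ π) ∘ Δ` the induced right
`(P/I)`-coaction and `B = P^{co(P/I)}`.  If `P` is a `(P/I)`-Galois extension of `B`
(i.e. the canonical map `P ⊗_B P → P ⊗ (P/I)` is bijective, expressed here via its lift
`T_R : P ⊗ P → P ⊗ H`), then `I = B⁺P` where `B⁺ = B ∩ Ker ε`. -/
theorem I_eq_BplusP_of_galois
    (π : P →ₐ[k] H) (hπsurj : Function.Surjective π)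
    (hπcomul : ∀ p : P, Coalgebra.comul (R := k) (π p) =
      (TensorProduct.map π.toLinearMap π.toLinearMap) (Coalgebra.comul (R := k) p))
    (hπcounit : ∀ p : P,
      Coalgebra.counit (R := k) (A := H) (π p) = Coalgebra.counit (R := k) (A := P) p)
    (δ : P →ₗ[k] P ⊗[k] H)
    (hδ : δ = (TensorProduct.map LinearMap.id π.toLinearMap) ∘ₗ Coalgebra.comul)
    -- the Galois condition: `can : P ⊗_B P → P ⊗ (P/I)` is bijective
    (hsurj : Function.Surjective (TR k P H π))
    (hker : LinearMap.ker (TR k P H π) = relSpan k P H δ) :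
    -- conclusion: `I = B⁺P`
    LinearMap.ker π.toLinearMap = Submodule.span k
      {x : P | ∃ b p : P, δ b = b ⊗ₜ[k] (1 : H) ∧
        Coalgebra.counit (R := k) (A := P) b = 0 ∧ x = b * p} := by
  set J := Submodule.span k
      {x : P | ∃ b p : P, δ b = b ⊗ₜ[k] (1 : H) ∧
        Coalgebra.counit (R := k) (A := P) b = 0 ∧ x = b * p} with hJ
  -- the averaging map φ : P ⊗ P → P, p ⊗ p' ↦ ε(p) p'
  set φ : P ⊗[k] P →ₗ[k] P := (TensorProduct.lid k P).toLinearMap ∘ₗ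
    LinearMap.rTensor P (Coalgebra.counit (R := k)) with hφ
  have hφtmul : ∀ a b : P, φ (a ⊗ₜ[k] b) = Coalgebra.counit (R := k) a • b := by
    intro a b
    simp [hφ, LinearMap.rTensor_tmul, TensorProduct.lid_tmul]
  -- φ maps relSpan into J
  have hφrel : relSpan k P H δ ≤ J.comap φ := by
    rw [relSpan, Submodule.span_le]
    rintro y ⟨p, p', b, hb, rfl⟩
    simp only [Submodule.mem_comap, map_sub, hφtmul, SetLike.mem_coe]
    have hb' : δ (b - Coalgebra.counit (R := k) b • 1) =
        (b - Coalgebra.counit (R := k) b • 1) ⊗ₜ[k] (1 : H) := by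
      rw [map_sub, map_smul, hb, hδ]
      simp only [LinearMap.comp_apply, Bialgebra.comul_one, Algebra.TensorProduct.one_def,
        TensorProduct.map_tmul, LinearMap.id_coe, id_eq, AlgHom.toLinearMap_apply, map_one,
        sub_tmul, smul_tmul']
    have hε' : Coalgebra.counit (R := k) (A := P) (b - Coalgebra.counit (R := k) b • 1) = 0 := by
      rw [map_sub, map_smul, Bialgebra.counit_one, smul_eq_mul, mul_one, sub_self]
    have hmem : (b - Coalgebra.counit (R := k) b • 1) * p' ∈ J :=
      Submodule.subset_span ⟨_, p', hb', hε', rfl⟩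
    have hcalc : Coalgebra.counit (R := k) (p * b) • p' -
        Coalgebra.counit (R := k) p • (b * p') =
        Coalgebra.counit (R := k) p • (-(( b - Coalgebra.counit (R := k) b • 1) * p')) := by
      rw [Bialgebra.counit_mul, sub_mul, smul_mul_assoc, one_mul, neg_sub, smul_sub, smul_smul]
    rw [hcalc]
    exact Submodule.smul_mem _ _ (Submodule.neg_mem _ hmem)
  apply le_antisymm
  · -- ker π ⊆ J
    intro x hx
    have hx' : π x = 0 := hx
    have hu : (LinearMap.rTensor P (antipode (R := k))) (Coalgebra.comul x) ∈ relSpan k P H δ := by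
      rw [← hker, LinearMap.mem_ker, aux_TR_antipode, hx', tmul_zero]
    have hφu : φ ((LinearMap.rTensor P (antipode (R := k))) (Coalgebra.comul x)) = x := by
      set r := ℛ k x with hr
      rw [← r.eq, map_sum, map_sum]
      have : ∀ i ∈ r.index, φ ((LinearMap.rTensor P (antipode (R := k))) (r.left i ⊗ₜ[k] r.right i))
          = Coalgebra.counit (R := k) (r.left i) • r.right i := by
        intro i _
        rw [LinearMap.rTensor_tmul, hφtmul, aux_counit_antipode]
      rw [Finset.sum_congr rfl this, aux_sum_counit_smul k P x r]
    rw [← hφu]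
    exact hφrel hu
  · -- J ⊆ ker π
    rw [hJ, Submodule.span_le]
    rintro x ⟨b, p, hb, hε, rfl⟩
    have hπb : π b = 0 := by
      set r := ℛ k b with hr
      have h1 : ∑ i ∈ r.index, r.left i ⊗ₜ[k] (π (r.right i)) = b ⊗ₜ[k] (1 : H) := by
        rw [← hb, hδ]
        simp only [LinearMap.comp_apply]
        rw [← r.eq, map_sum]
        exact Finset.sum_congr rfl fun i _ => by
          simp [TensorProduct.map_tmul]
      have h2 := congrArg (LinearMap.rTensor H (Coalgebra.counit (R := k) (A := P))) h1
      rw [map_sum] at h2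
      simp only [LinearMap.rTensor_tmul] at h2
      rw [Coalgebra.sum_counit_tmul_map_eq (R := k) π b (repr := r)] at h2
      rw [hε, TensorProduct.zero_tmul] at h2
      have h3 := congrArg (TensorProduct.lid k H) h2
      simpa using h3
    simp only [SetLike.mem_coe, LinearMap.mem_ker, AlgHom.toLinearMap_apply, map_mul, hπb,
      zero_mul]


end
end

section
/- Let P be a Hopf algebra, I a Hopf ideal with I = B⁺P where B = P^{co(P/I)}, and suppose Ψ : P → B is a left B-linear convolution-invertible map. Then for all b ∈ B and p ∈ P, Ψ⁻¹(b₁ p) b₂ = ε(b) Ψ⁻¹(p). -/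
open TensorProduct

noncomputable section AuxConvolution

variable {k : Type*} [Field k] {P : Type*} [Ring P] [HopfAlgebra k P]

/-- The map `q ↦ ε(q) • 1`. -/
noncomputable def auxMu (k : Type*) [Field k] (P : Type*) [Ring P] [HopfAlgebra k P] :
    P →ₗ[k] P :=
  (LinearMap.toSpanSingleton k P 1) ∘ₗ (Coalgebra.counit (R := k) (A := P))

lemma auxMu_apply (q : P) : auxMu k P q = Coalgebra.counit (R := k) q • (1 : P) := rfl

lemma auxB₁ (f : P →ₗ[k] P) (q : P) :
    LinearMap.mul' k P (TensorProduct.map f (auxMu k P) (Coalgebra.comul (R := k) q)) = f q := by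
  have h : (LinearMap.mul' k P) ∘ₗ TensorProduct.map f (auxMu k P)
      = f ∘ₗ (TensorProduct.rid k P).toLinearMap ∘ₗ
        ((Coalgebra.counit (R := k) (A := P)).lTensor P) := by
    apply TensorProduct.ext'
    intro x y
    simp [auxMu, LinearMap.mul'_apply, mul_smul_comm]
  calc LinearMap.mul' k P (TensorProduct.map f (auxMu k P) (Coalgebra.comul (R := k) q))
      = (f ∘ₗ (TensorProduct.rid k P).toLinearMap ∘ₗ
          ((Coalgebra.counit (R := k) (A := P)).lTensor P)) (Coalgebra.comul (R := k) q) :=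
        LinearMap.congr_fun h _
    _ = f q := by simp

lemma auxB₂ (g : P →ₗ[k] P) (q : P) :
    LinearMap.mul' k P (TensorProduct.map (auxMu k P) g (Coalgebra.comul (R := k) q)) = g q := by
  have h : (LinearMap.mul' k P) ∘ₗ TensorProduct.map (auxMu k P) g
      = g ∘ₗ (TensorProduct.lid k P).toLinearMap ∘ₗ
        ((Coalgebra.counit (R := k) (A := P)).rTensor P) := by
    apply TensorProduct.ext'
    intro x y
    simp [auxMu, LinearMap.mul'_apply, smul_mul_assoc]
  calc LinearMap.mul' k P (TensorProduct.map (auxMu k P) g (Coalgebra.comul (R := k) q))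
      = (g ∘ₗ (TensorProduct.lid k P).toLinearMap ∘ₗ
          ((Coalgebra.counit (R := k) (A := P)).rTensor P)) (Coalgebra.comul (R := k) q) :=
        LinearMap.congr_fun h _
    _ = g q := by simp

/-- Key computation: `Σ f(q₁) Ψ(q₂) Ψ⁻¹(q₃) = f q`. -/
lemma auxA (Ψ Ψinv : P →ₗ[k] P)
    (hconv₁ : ∀ q : P, (LinearMap.mul' k P) ((TensorProduct.map Ψ Ψinv)
        (Coalgebra.comul (R := k) q)) = (Coalgebra.counit (R := k) (A := P) q) • (1 : P))
    (f : P →ₗ[k] P) (q : P) :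
    LinearMap.mul' k P (TensorProduct.map ((LinearMap.mul' k P) ∘ₗ TensorProduct.map f Ψ) Ψinv
      ((Coalgebra.comul (R := k) (A := P)).rTensor P (Coalgebra.comul (R := k) q))) = f q := by
  have hM : (LinearMap.mul' k P) ∘ₗ
        TensorProduct.map ((LinearMap.mul' k P) ∘ₗ TensorProduct.map f Ψ) Ψinv
      = ((LinearMap.mul' k P) ∘ₗ
          TensorProduct.map f ((LinearMap.mul' k P) ∘ₗ TensorProduct.map Ψ Ψinv)) ∘ₗ
        (TensorProduct.assoc k P P P).toLinearMap := by
    apply TensorProduct.ext_threefold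
    intro x y z
    simp [LinearMap.mul'_apply, mul_assoc]
  have h2 : TensorProduct.map f ((LinearMap.mul' k P) ∘ₗ TensorProduct.map Ψ Ψinv) ∘ₗ
      (Coalgebra.comul (R := k) (A := P)).lTensor P = TensorProduct.map f (auxMu k P) := by
    apply TensorProduct.ext'
    intro x y
    simp [hconv₁ y, auxMu]
  calc LinearMap.mul' k P (TensorProduct.map ((LinearMap.mul' k P) ∘ₗ TensorProduct.map f Ψ) Ψinv
        ((Coalgebra.comul (R := k) (A := P)).rTensor P (Coalgebra.comul (R := k) q)))
      = (((LinearMap.mul' k P) ∘ₗ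
          TensorProduct.map f ((LinearMap.mul' k P) ∘ₗ TensorProduct.map Ψ Ψinv)) ∘ₗ
        (TensorProduct.assoc k P P P).toLinearMap)
          ((Coalgebra.comul (R := k) (A := P)).rTensor P (Coalgebra.comul (R := k) q)) :=
        LinearMap.congr_fun hM _
    _ = LinearMap.mul' k P (TensorProduct.map f ((LinearMap.mul' k P) ∘ₗ TensorProduct.map Ψ Ψinv)
          ((Coalgebra.comul (R := k) (A := P)).lTensor P (Coalgebra.comul (R := k) q))) := by
        simp only [LinearMap.comp_apply, LinearEquiv.coe_coe, Coalgebra.coassoc_apply]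
    _ = LinearMap.mul' k P (TensorProduct.map f (auxMu k P) (Coalgebra.comul (R := k) q)) :=
        congrArg (LinearMap.mul' k P) (LinearMap.congr_fun h2 (Coalgebra.comul (R := k) q))
    _ = f q := auxB₁ f q

end AuxConvolution

/-- Let `P` be a Hopf algebra over a field `k`, `I` a Hopf ideal presented as the kernel of a
surjective Hopf algebra map `π : P → H` (so `H = P/I`), `δ = (id ⊗ π) ∘ Δ` the induced right
`H`-coaction and `B = P^{co H}` the coinvariants.  Assume `I = B⁺P`.  If `Ψ : P → B ⊆ P` is a
left `B`-linear convolution-invertible map with convolution inverse `Ψ⁻¹`, then for all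
`b ∈ B` and `p ∈ P` one has `Ψ⁻¹(b₁ p) b₂ = ε(b) Ψ⁻¹(p)`. -/
theorem convolution_inverse_property
    (k : Type*) [Field k] (P : Type*) [Ring P] [HopfAlgebra k P]
    (H : Type*) [Ring H] [HopfAlgebra k H]
    (π : P →ₐ[k] H) (hπsurj : Function.Surjective π)
    (hπcomul : ∀ p : P, Coalgebra.comul (R := k) (π p) =
      (TensorProduct.map π.toLinearMap π.toLinearMap) (Coalgebra.comul (R := k) p))
    (hπcounit : ∀ p : P,
      Coalgebra.counit (R := k) (A := H) (π p) = Coalgebra.counit (R := k) (A := P) p)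
    -- the right `H`-coaction `δ = (id ⊗ π) ∘ Δ` on `P`:
    (δ : P →ₗ[k] P ⊗[k] H)
    (hδ : δ = (TensorProduct.map LinearMap.id π.toLinearMap) ∘ₗ Coalgebra.comul)
    -- `I = B⁺P`, where `I = Ker π` and `B⁺ = B ∩ Ker ε`:
    (hI : LinearMap.ker π.toLinearMap = Submodule.span k
      {x : P | ∃ b p : P, δ b = b ⊗ₜ[k] (1 : H) ∧
        Coalgebra.counit (R := k) (A := P) b = 0 ∧ x = b * p})
    -- `Ψ : P → B` is left `B`-linear:
    (Ψ : P →ₗ[k] P)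
    (hΨB : ∀ p : P, δ (Ψ p) = Ψ p ⊗ₜ[k] (1 : H))
    (hΨlin : ∀ b p : P, δ b = b ⊗ₜ[k] (1 : H) → Ψ (b * p) = b * Ψ p)
    -- `Ψ` is convolution invertible with inverse `Ψinv` (also valued in `B`):
    (Ψinv : P →ₗ[k] P)
    (hΨinvB : ∀ p : P, δ (Ψinv p) = Ψinv p ⊗ₜ[k] (1 : H))
    (hconv₁ : ∀ p : P, (LinearMap.mul' k P) ((TensorProduct.map Ψ Ψinv)
        (Coalgebra.comul (R := k) p)) = (Coalgebra.counit (R := k) (A := P) p) • (1 : P))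
    (hconv₂ : ∀ p : P, (LinearMap.mul' k P) ((TensorProduct.map Ψinv Ψ)
        (Coalgebra.comul (R := k) p)) = (Coalgebra.counit (R := k) (A := P) p) • (1 : P)) :
    -- conclusion: `Ψ⁻¹(b₁ p) b₂ = ε(b) Ψ⁻¹(p)` for all `b ∈ B`, `p ∈ P`
    ∀ b p : P, δ b = b ⊗ₜ[k] (1 : H) →
      (LinearMap.mul' k P) ((TensorProduct.map Ψinv LinearMap.id)
          ((Coalgebra.comul (R := k) b) * (p ⊗ₜ[k] (1 : P)))) =
        (Coalgebra.counit (R := k) (A := P) b) • Ψinv p := by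
  intro b p hb
  classical
  set C : P →ₗ[k] P ⊗[k] P := Coalgebra.comul (R := k) (A := P) with hC
  set m : P ⊗[k] P →ₗ[k] P := LinearMap.mul' k P with hm
  -- the "coinvariants" as kernel of `L`
  set L : P →ₗ[k] P ⊗[k] H := δ - (TensorProduct.mk k P H).flip 1 with hL
  have memB : ∀ x : P, x ∈ LinearMap.ker L ↔ δ x = x ⊗ₜ[k] (1 : H) := by
    intro x
    simp [hL, LinearMap.mem_ker, LinearMap.sub_apply, sub_eq_zero]
  -- Step 1 : `(1 ⊗ L)(Δ b) = 0`, i.e. `Δ b ∈ P ⊗ B`.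
  have hδb : (TensorProduct.map LinearMap.id π.toLinearMap) (C b) = b ⊗ₜ[k] (1 : H) := by
    rw [hδ] at hb; exact hb
  have e1 : (δ.lTensor P) (C b) =
      (TensorProduct.assoc k P P H) ((C b) ⊗ₜ[k] (1 : H)) := by
    have natA : ((TensorProduct.map LinearMap.id π.toLinearMap).lTensor P) ∘ₗ
        (TensorProduct.assoc k P P P).toLinearMap =
        (TensorProduct.assoc k P P H).toLinearMap ∘ₗ
          (π.toLinearMap.lTensor (P ⊗[k] P)) := by
      apply TensorProduct.ext_threefold
      intro x y z
      simp
    have comm1 : (π.toLinearMap.lTensor (P ⊗[k] P)) ∘ₗ (C.rTensor P) =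
        (C.rTensor H) ∘ₗ ((TensorProduct.map LinearMap.id π.toLinearMap)) := by
      apply TensorProduct.ext'
      intro x y
      simp
    calc (δ.lTensor P) (C b)
        = ((TensorProduct.map LinearMap.id π.toLinearMap).lTensor P) ((C.lTensor P) (C b)) := by
          rw [hδ, LinearMap.lTensor_comp]; rfl
      _ = ((TensorProduct.map LinearMap.id π.toLinearMap).lTensor P)
            ((TensorProduct.assoc k P P P) ((C.rTensor P) (C b))) := by
          rw [hC]; rw [Coalgebra.coassoc_apply]
      _ = (TensorProduct.assoc k P P H)
            ((π.toLinearMap.lTensor (P ⊗[k] P)) ((C.rTensor P) (C b))) :=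
          LinearMap.congr_fun natA _
      _ = (TensorProduct.assoc k P P H)
            ((C.rTensor H) ((TensorProduct.map LinearMap.id π.toLinearMap) (C b))) := by
          rw [← LinearMap.comp_apply, comm1, LinearMap.comp_apply]
      _ = (TensorProduct.assoc k P P H) ((C b) ⊗ₜ[k] (1 : H)) := by
          rw [hδb, LinearMap.rTensor_tmul]
  have e2 : (((TensorProduct.mk k P H).flip 1).lTensor P) (C b) =
      (TensorProduct.assoc k P P H) ((C b) ⊗ₜ[k] (1 : H)) := by
    have h : (((TensorProduct.mk k P H).flip 1).lTensor P) =
        (TensorProduct.assoc k P P H).toLinearMap ∘ₗ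
          ((TensorProduct.mk k (P ⊗[k] P) H).flip 1) := by
      apply TensorProduct.ext'
      intro x y
      simp
    rw [h]; rfl
  have hker : (L.lTensor P) (C b) = 0 := by
    rw [hL, LinearMap.lTensor_sub, LinearMap.sub_apply, e1, e2, sub_self]
  -- Step 2 : write `Δ b = Σ xᵢ ⊗ cᵢ` with `cᵢ ∈ B`, using flatness.
  have exact1 : Function.Exact ((LinearMap.ker L).subtype) L :=
    LinearMap.exact_subtype_ker_map L
  have exact2 := Module.Flat.lTensor_exact (R := k) P exact1
  obtain ⟨s, hs⟩ := (exact2 (C b)).mp hker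
  -- Step 3 : the main computation.
  set u : (P ⊗[k] P) ⊗[k] P := C.rTensor P (C p) with hu
  set h : (P ⊗[k] P) ⊗[k] P →ₗ[k] P :=
    m ∘ₗ TensorProduct.map (m ∘ₗ TensorProduct.map Ψinv Ψ) Ψinv with hh
  -- (a) on the range of `P ⊗ B`, the LHS agrees with the convolution expression
  have key : ∀ s' : P ⊗[k] (LinearMap.ker L),
      m (TensorProduct.map Ψinv LinearMap.id
        (((((LinearMap.ker L).subtype).lTensor P) s') * (p ⊗ₜ[k] (1 : P)))) =
      h ((LinearMap.mulLeft k ((((LinearMap.ker L).subtype).lTensor P) s')).rTensor P u) := by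
    intro s'
    induction s' using TensorProduct.induction_on with
    | zero =>
        simp [LinearMap.mulLeft_zero_eq_zero]
    | add x y hx hy =>
        have hadd : ∀ a b : P ⊗[k] P,
            LinearMap.mulLeft k (a + b) = LinearMap.mulLeft k a + LinearMap.mulLeft k b := by
          intro a b; ext w; simp [add_mul]
        rw [map_add, add_mul, map_add, map_add, hx, hy, hadd, LinearMap.rTensor_add,
          LinearMap.add_apply, map_add]
    | tmul x c =>
        have hc' : δ (c : P) = (c : P) ⊗ₜ[k] (1 : H) := (memB (c : P)).mp c.2
        have lhs_eq : m (TensorProduct.map Ψinv LinearMap.id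
            (((((LinearMap.ker L).subtype).lTensor P) (x ⊗ₜ c)) * (p ⊗ₜ[k] (1 : P)))) =
            Ψinv (x * p) * (c : P) := by
          simp [Algebra.TensorProduct.tmul_mul_tmul, hm]
        rw [lhs_eq]
        -- now the right hand side
        have hmulLeft : LinearMap.mulLeft k (x ⊗ₜ[k] (c : P)) =
            TensorProduct.map (LinearMap.mulLeft k x) (LinearMap.mulLeft k (c : P)) := by
          apply TensorProduct.ext'
          intro a w
          simp [Algebra.TensorProduct.tmul_mul_tmul]
        have hlt : (((LinearMap.ker L).subtype).lTensor P) (x ⊗ₜ c) = x ⊗ₜ[k] (c : P) := by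
          simp
        rw [hlt, hmulLeft]
        set fxc : P →ₗ[k] P :=
          (LinearMap.mulRight k (c : P)) ∘ₗ Ψinv ∘ₗ (LinearMap.mulLeft k x) with hfxc
        have comp2 : h ∘ₗ ((TensorProduct.map (LinearMap.mulLeft k x)
            (LinearMap.mulLeft k (c : P))).rTensor P) =
            m ∘ₗ TensorProduct.map (m ∘ₗ TensorProduct.map fxc Ψ) Ψinv := by
          apply TensorProduct.ext_threefold
          intro a w d
          simp only [hh, hfxc, LinearMap.comp_apply, LinearMap.rTensor_tmul,
            TensorProduct.map_tmul, LinearMap.mulLeft_apply, LinearMap.mulRight_apply,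
            LinearMap.mul'_apply, hm]
          rw [hΨlin (c : P) w hc']
          simp only [mul_assoc]
        rw [← LinearMap.comp_apply, comp2, LinearMap.comp_apply]
        have := auxA (k := k) (P := P) Ψ Ψinv hconv₁ fxc p
        rw [hu, hm, hC]
        rw [this]
        simp [hfxc]
    -- (b) evaluate the convolution expression at `Δ b`.
  have hGb : h ((LinearMap.mulLeft k (C b)).rTensor P u) =
      (Coalgebra.counit (R := k) (A := P) b) • Ψinv p := by
    have hcomulmul : (LinearMap.mulLeft k (C b)) ∘ₗ C = C ∘ₗ (LinearMap.mulLeft k b) := by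
      ext q
      simp [hC]
    have step1 : (LinearMap.mulLeft k (C b)).rTensor P u =
        C.rTensor P (((LinearMap.mulLeft k b).rTensor P) (C p)) := by
      rw [hu, ← LinearMap.comp_apply, ← LinearMap.rTensor_comp, hcomulmul,
        LinearMap.rTensor_comp, LinearMap.comp_apply]
    have comp3 : h ∘ₗ (C.rTensor P) = m ∘ₗ TensorProduct.map (auxMu k P) Ψinv := by
      apply TensorProduct.ext'
      intro q d
      simp [hh, hC, hm, hconv₂ q, auxMu_apply]
      rw [← hm, ← hC, hconv₂ q, smul_mul_assoc, one_mul]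
    have comp4 : (TensorProduct.map (auxMu k P) Ψinv) ∘ₗ ((LinearMap.mulLeft k b).rTensor P) =
        TensorProduct.map ((auxMu k P) ∘ₗ (LinearMap.mulLeft k b)) Ψinv := by
      apply TensorProduct.ext'
      intro q d
      simp
    have hmu : (auxMu k P) ∘ₗ (LinearMap.mulLeft k b) =
        (Coalgebra.counit (R := k) (A := P) b) • (auxMu k P) := by
      ext q
      simp [auxMu_apply, smul_smul]
    calc h ((LinearMap.mulLeft k (C b)).rTensor P u)
        = h (C.rTensor P (((LinearMap.mulLeft k b).rTensor P) (C p))) := by rw [step1]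
      _ = m (TensorProduct.map (auxMu k P) Ψinv
            (((LinearMap.mulLeft k b).rTensor P) (C p))) := by
          exact LinearMap.congr_fun comp3 _
      _ = m (TensorProduct.map ((auxMu k P) ∘ₗ (LinearMap.mulLeft k b)) Ψinv (C p)) := by
          exact congrArg m (LinearMap.congr_fun comp4 (C p))
      _ = (Coalgebra.counit (R := k) (A := P) b) •
            m (TensorProduct.map (auxMu k P) Ψinv (C p)) := by
          rw [hmu, TensorProduct.map_smul_left, LinearMap.smul_apply, map_smul]
      _ = (Coalgebra.counit (R := k) (A := P) b) • Ψinv p := by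
          rw [hC, hm, auxB₂]
  calc m (TensorProduct.map Ψinv LinearMap.id ((C b) * (p ⊗ₜ[k] (1 : P))))
      = m (TensorProduct.map Ψinv LinearMap.id
          (((((LinearMap.ker L).subtype).lTensor P) s) * (p ⊗ₜ[k] (1 : P)))) := by rw [hs]
    _ = h ((LinearMap.mulLeft k ((((LinearMap.ker L).subtype).lTensor P) s)).rTensor P u) :=
        key s
    _ = h ((LinearMap.mulLeft k (C b)).rTensor P u) := by rw [hs]
    _ = (Coalgebra.counit (R := k) (A := P) b) • Ψinv p := hGb
end

section
/- Let q = e^{2πi/3} and H₊ the ℂ-algebra generated by ã, b̃ with relations ãb̃ = q b̃ã, ã³ = 1, b̃³ = 0. Then the 9 monomials ã^p b̃^r, p, r ∈ {0,1,2}, form a ℂ-basis of H₊; in particular dim_ℂ H₊ = 9 and b̃² ≠ 0. -/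
noncomputable section

/-- `q = e^{2πi/3}`, a primitive cube root of unity. -/
def qc : ℂ := Complex.exp (2 * Real.pi * Complex.I / 3)

/-- generators `ã, b̃` of the free algebra. -/
def gop : FreeAlgebra ℂ (Fin 2) := FreeAlgebra.ι ℂ 0
def gb : FreeAlgebra ℂ (Fin 2) := FreeAlgebra.ι ℂ 1

/-- The defining relations of `H₊`: `ãb̃ = q b̃ã`, `ã³ = 1`, `b̃³ = 0`. -/
inductive HplusRel : FreeAlgebra ℂ (Fin 2) → FreeAlgebra ℂ (Fin 2) → Prop
  | ab : HplusRel (gop * gb) (qc • (gb * gop))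
  | a3 : HplusRel (gop ^ 3) 1
  | b3 : HplusRel (gb ^ 3) 0

/-- the 9-dimensional algebra `H₊`. -/
abbrev Hplus : Type := RingQuot HplusRel

def ta : Hplus := RingQuot.mkAlgHom ℂ HplusRel gop
def tb : Hplus := RingQuot.mkAlgHom ℂ HplusRel gb

/-! ### Auxiliary facts -/

lemma qc_pow_three : qc ^ 3 = 1 := by
  rw [qc, ← Complex.exp_nat_mul]
  rw [show (3 : ℕ) * (2 * (Real.pi : ℂ) * Complex.I / 3) = 2 * (Real.pi : ℂ) * Complex.I by
    ring]
  exact Complex.exp_two_pi_mul_I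

/-- the representation space `ℂ³ ⊗ ℂ³`. -/
abbrev Vr : Type := (Fin 3 × Fin 3) → ℂ

lemma fin3_mk2 (h : (2:ℕ) < 3) : (⟨2, h⟩ : Fin 3) = 2 := rfl

/-- `A = J ⊗ I₃` (cyclic shift in the first factor). -/
def Amap : Module.End ℂ Vr := LinearMap.funLeft ℂ ℂ (fun p : Fin 3 × Fin 3 => (p.1 + 1, p.2))

/-- `B = Q ⊗ N`. -/
def Bmap : Module.End ℂ Vr where
  toFun f := fun p => qc ^ (p.1 : ℕ) * (if p.2 = 0 then 0 else f (p.1, p.2 - 1))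
  map_add' f g := by
    funext p
    by_cases h : p.2 = 0 <;> simp [h] <;> ring
  map_smul' c f := by
    funext p
    by_cases h : p.2 = 0 <;> simp [h] <;> ring

lemma Amap_apply (f : Vr) (p : Fin 3 × Fin 3) : Amap f p = f (p.1 + 1, p.2) := rfl

lemma Bmap_apply (f : Vr) (p : Fin 3 × Fin 3) :
    Bmap f p = qc ^ (p.1 : ℕ) * (if p.2 = 0 then 0 else f (p.1, p.2 - 1)) := rfl

lemma hA3 : Amap ^ 3 = 1 := by
  apply LinearMap.ext; intro f
  funext p
  show f (p.1 + 1 + 1 + 1, p.2) = f p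
  congr 1
  have : ∀ i : Fin 3, i + 1 + 1 + 1 = i := by decide
  rw [this]

lemma hB3 : Bmap ^ 3 = 0 := by
  apply LinearMap.ext; intro f
  funext p
  obtain ⟨i, j⟩ := p
  show (Bmap * (Bmap * Bmap)) f (i, j) = 0
  fin_cases j <;>
    simp [Module.End.mul_apply, Bmap_apply]

lemma hAB : Amap * Bmap = qc • (Bmap * Amap) := by
  apply LinearMap.ext; intro f
  funext p
  obtain ⟨i, j⟩ := p
  show Bmap f (i + 1, j) = qc * Bmap (Amap f) (i, j)
  by_cases hj : j = 0
  · simp [Bmap_apply, hj]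
  · fin_cases i <;>
      simp [Bmap_apply, Amap_apply, hj] <;>
      ring_nf <;>
      simp [pow_succ, qc_pow_three] <;> ring_nf <;>
      rw [show qc ^ 3 = qc * qc * qc by ring] <;>
      simp [show qc * qc * qc = 1 by rw [show qc*qc*qc = qc^3 by ring, qc_pow_three]]

/-- the representation `H₊ → End(ℂ⁹)`. -/
def Fmap : FreeAlgebra ℂ (Fin 2) →ₐ[ℂ] Module.End ℂ Vr :=
  FreeAlgebra.lift ℂ ![Amap, Bmap]

lemma Fmap_rel : ∀ ⦃x y : FreeAlgebra ℂ (Fin 2)⦄, HplusRel x y → Fmap x = Fmap y := by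
  intro x y h
  cases h with
  | ab =>
      simp only [gop, gb, map_mul, map_smul, Fmap, FreeAlgebra.lift_ι_apply,
        Matrix.cons_val_zero, Matrix.cons_val_one, Matrix.head_cons]
      exact hAB
  | a3 =>
      simp only [gop, map_pow, map_one, Fmap, FreeAlgebra.lift_ι_apply, Matrix.cons_val_zero]
      exact hA3
  | b3 =>
      simp only [gb, map_pow, map_zero, Fmap, FreeAlgebra.lift_ι_apply,
        Matrix.cons_val_one, Matrix.head_cons]
      exact hB3

def φrep : Hplus →ₐ[ℂ] Module.End ℂ Vr := RingQuot.liftAlgHom ℂ ⟨Fmap, Fmap_rel⟩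

lemma φrep_ta : φrep ta = Amap := by
  rw [ta, φrep, RingQuot.liftAlgHom_mkAlgHom_apply]
  simp [Fmap, gop]

lemma φrep_tb : φrep tb = Bmap := by
  rw [tb, φrep, RingQuot.liftAlgHom_mkAlgHom_apply]
  simp [Fmap, gb]

/-! relations in `Hplus` -/

lemma ta_cube : ta ^ 3 = 1 := by
  have := RingQuot.mkAlgHom_rel ℂ HplusRel.a3
  simpa [ta, map_pow] using this

lemma tb_cube : tb ^ 3 = 0 := by
  have := RingQuot.mkAlgHom_rel ℂ HplusRel.b3
  simpa [tb, map_pow] using this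

lemma comm_ab : ta * tb = qc • (tb * ta) := by
  have := RingQuot.mkAlgHom_rel ℂ HplusRel.ab
  simpa [ta, tb, map_mul, map_smul] using this

lemma comm_ba : tb * ta = qc ^ 2 • (ta * tb) := by
  rw [comm_ab, smul_smul, show qc ^ 2 * qc = qc ^ 3 by ring, qc_pow_three, one_smul]

lemma comm_pow_ba (r : ℕ) : tb ^ r * ta = (qc ^ 2) ^ r • (ta * tb ^ r) := by
  induction r with
  | zero => simp
  | succ n ih =>
      rw [pow_succ, mul_assoc, comm_ba, mul_smul_comm, ← mul_assoc, ih]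
      rw [smul_mul_assoc, smul_smul, pow_succ]
      ring_nf
      rw [mul_assoc]

lemma comm_pow_pow (r p : ℕ) : tb ^ r * ta ^ p = ((qc ^ 2) ^ r) ^ p • (ta ^ p * tb ^ r) := by
  induction p with
  | zero => simp
  | succ n ih =>
      rw [pow_succ, ← mul_assoc, ih, smul_mul_assoc, mul_assoc, comm_pow_ba,
        mul_smul_comm, smul_smul, pow_succ]
      ring_nf
      rw [mul_assoc (ta ^ n) ta]

lemma ta_pow_mod (p : ℕ) : ta ^ p = ta ^ (p % 3) := by
  conv_lhs => rw [← Nat.div_add_mod p 3]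
  rw [pow_add, pow_mul, ta_cube, one_pow, one_mul]

lemma tb_pow_zero {r : ℕ} (hr : 3 ≤ r) : tb ^ r = 0 := by
  have : tb ^ r = tb ^ 3 * tb ^ (r - 3) := by rw [← pow_add]; congr 1; omega
  rw [this, tb_cube, zero_mul]

/-! the span of the monomials -/

def fmon : Fin 3 × Fin 3 → Hplus := fun pr => ta ^ (pr.1 : ℕ) * tb ^ (pr.2 : ℕ)

def Smod : Submodule ℂ Hplus := Submodule.span ℂ (Set.range fmon)

lemma mem_mon (p r : ℕ) : ta ^ p * tb ^ r ∈ Smod := by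
  by_cases hr : 3 ≤ r
  · rw [tb_pow_zero hr, mul_zero]; exact Submodule.zero_mem _
  · push_neg at hr
    rw [ta_pow_mod p]
    have hp : p % 3 < 3 := Nat.mod_lt _ (by norm_num)
    exact Submodule.subset_span ⟨(⟨p % 3, hp⟩, ⟨r, hr⟩), rfl⟩

lemma mul_mem_Smod {x y : Hplus} (hx : x ∈ Smod) (hy : y ∈ Smod) : x * y ∈ Smod := by
  induction hx using Submodule.span_induction with
  | mem x hx' =>
      induction hy using Submodule.span_induction with
      | mem y hy' =>
          obtain ⟨⟨p, r⟩, rfl⟩ := hx'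
          obtain ⟨⟨p', r'⟩, rfl⟩ := hy'
          show ta ^ (p : ℕ) * tb ^ (r : ℕ) * (ta ^ (p' : ℕ) * tb ^ (r' : ℕ)) ∈ Smod
          rw [mul_assoc, ← mul_assoc (tb ^ (r : ℕ)), comm_pow_pow,
            smul_mul_assoc, mul_smul_comm,
            mul_assoc (ta ^ (p' : ℕ)) (tb ^ (r : ℕ)), ← mul_assoc (ta ^ (p : ℕ)),
            ← pow_add, ← pow_add]
          exact Submodule.smul_mem _ _ (mem_mon _ _)
      | zero => rw [mul_zero]; exact Submodule.zero_mem _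
      | add y z _ _ h1 h2 => rw [mul_add]; exact Submodule.add_mem _ h1 h2
      | smul c y _ h1 => rw [mul_smul_comm]; exact Submodule.smul_mem _ _ h1
  | zero => rw [zero_mul]; exact Submodule.zero_mem _
  | add x z _ _ h1 h2 => rw [add_mul]; exact Submodule.add_mem _ h1 h2
  | smul c x _ h1 => rw [smul_mul_assoc]; exact Submodule.smul_mem _ _ h1

lemma Smod_top : Smod = ⊤ := by
  rw [eq_top_iff]
  rintro x -
  obtain ⟨w, rfl⟩ := RingQuot.mkAlgHom_surjective ℂ HplusRel x
  induction w using FreeAlgebra.induction with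
  | grade0 r =>
      rw [AlgHom.commutes]
      have : (algebraMap ℂ Hplus) r = r • (ta ^ (0 : ℕ) * tb ^ (0 : ℕ)) := by
        simp [Algebra.algebraMap_eq_smul_one]
      rw [this]
      exact Submodule.smul_mem _ _ (mem_mon 0 0)
  | grade1 x =>
      fin_cases x
      · show ta ∈ Smod
        simpa using mem_mon 1 0
      · show tb ∈ Smod
        simpa using mem_mon 0 1
  | mul a b ha hb =>
      rw [map_mul]; exact mul_mem_Smod ha hb
  | add a b ha hb =>
      rw [map_add]; exact Submodule.add_mem _ ha hb

/-! linear independence -/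

lemma single_indep :
    LinearIndependent ℂ (fun pr : Fin 3 × Fin 3 => (Pi.single ((-pr.1, pr.2) : Fin 3 × Fin 3) 1 : Vr)) := by
  have h := (Pi.basisFun ℂ (Fin 3 × Fin 3)).linearIndependent
  have he : (fun pr : Fin 3 × Fin 3 => (Pi.single ((-pr.1, pr.2) : Fin 3 × Fin 3) 1 : Vr)) =
      (⇑(Pi.basisFun ℂ (Fin 3 × Fin 3)) ∘ fun pr : Fin 3 × Fin 3 => ((-pr.1, pr.2) : Fin 3 × Fin 3)) := by
    funext pr
    simp [Pi.basisFun_apply]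
  rw [he]
  exact h.comp _ (by decide)

lemma key_eval :
    (fun pr : Fin 3 × Fin 3 =>
        (φrep (ta ^ (pr.1 : ℕ) * tb ^ (pr.2 : ℕ))) ((Pi.single ((0, 0) : Fin 3 × Fin 3) 1 : Vr))) =
      fun pr : Fin 3 × Fin 3 => (Pi.single ((-pr.1, pr.2) : Fin 3 × Fin 3) 1 : Vr) := by
  funext pr
  obtain ⟨p, r⟩ := pr
  rw [map_mul, map_pow, map_pow, φrep_ta, φrep_tb]
  funext x
  obtain ⟨i, j⟩ := x
  fin_cases p <;> fin_cases r <;> fin_cases i <;> fin_cases j <;>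
    simp (config := { decide := true }) [Module.End.mul_apply, pow_succ, Amap_apply,
      Bmap_apply, Pi.single_apply, Prod.ext_iff, Fin.ext_iff, fin3_mk2]

lemma fmon_indep : LinearIndependent ℂ fmon := by
  apply LinearIndependent.of_comp (φrep.toLinearMap)
  apply LinearIndependent.of_comp (LinearMap.applyₗ ((Pi.single ((0, 0) : Fin 3 × Fin 3) 1 : Vr)))
  have : (⇑(LinearMap.applyₗ ((Pi.single ((0, 0) : Fin 3 × Fin 3) 1 : Vr))) ∘
      ⇑φrep.toLinearMap ∘ fmon) =
      fun pr : Fin 3 × Fin 3 => (Pi.single ((-pr.1, pr.2) : Fin 3 × Fin 3) 1 : Vr) := by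
    rw [← key_eval]
    rfl
  rw [this]
  exact single_indep

/-- The 9 monomials `ã^p b̃^r`, `p, r ∈ {0,1,2}`, form a `ℂ`-basis of `H₊`;
in particular `dim_ℂ H₊ = 9` and `b̃² ≠ 0`. -/
theorem Hplus_monomial_basis :
    LinearIndependent ℂ (fun pr : Fin 3 × Fin 3 => ta ^ (pr.1 : ℕ) * tb ^ (pr.2 : ℕ)) ∧
    Submodule.span ℂ
      (Set.range (fun pr : Fin 3 × Fin 3 => ta ^ (pr.1 : ℕ) * tb ^ (pr.2 : ℕ))) = ⊤ ∧
    Module.finrank ℂ Hplus = 9 ∧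
    tb ^ 2 ≠ 0 := by
  have hind : LinearIndependent ℂ fmon := fmon_indep
  have hspan : Submodule.span ℂ (Set.range fmon) = ⊤ := Smod_top
  refine ⟨hind, hspan, ?_, ?_⟩
  · have b : Module.Basis (Fin 3 × Fin 3) ℂ Hplus := Module.Basis.mk hind (by rw [hspan])
    rw [Module.finrank_eq_card_basis b]
    simp
  · intro h
    have := hind.ne_zero ((0 : Fin 3), (2 : Fin 3))
    apply this
    show ta ^ ((0 : Fin 3) : ℕ) * tb ^ ((2 : Fin 3) : ℕ) = 0
    simp [h]

end
end
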